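/- The softmax-weighted smooth maximum error bound implies asymptotic completeness for the maximum: given any ε > 0 and any nonincreasing a with a_1 > a_2 (strict gap), for all k ≥ (1/(a_1 - a_2)) · log(((a_1 - a_m)/ε)(m-1) - 1) (when this quantity is positive), we have a_1 - max~_k(a) ≤ ε. -/

import Mathlib

open Finset Real

theorem softmax_aux (m : ℕ) (hm : 2 ≤ m) (a : Fin m → ℝ) (ha : Antitone a)
    (i0 i1 iL : Fin m) (h0 : (i0 : ℕ) = 0) (h1 : (i1 : ℕ) = 1) (hL : (iL : ℕ) = m - 1)
    (hgap : a i1 < a i0) (ε : ℝ) (hε : 0 < ε)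
    (hpos : 0 < ((a i0 - a iL) / ε) * (m - 1) - 1)
    (k : ℝ) (hk : (1 / (a i0 - a i1)) * Real.log (((a i0 - a iL) / ε) * (m - 1) - 1) ≤ k) :
    a i0 - (∑ i, a i * Real.exp (k * a i)) / (∑ i, Real.exp (k * a i)) ≤ ε := by
  have hd : 0 < a i0 - a i1 := by linarith
  set C : ℝ := ((a i0 - a iL) / ε) * (m - 1) - 1 with hC
  have hLle : ∀ i : Fin m, a iL ≤ a i := by
    intro i
    exact ha (by rw [Fin.le_def, hL]; omega)
  have h1le : ∀ i : Fin m, i ≠ i0 → a i ≤ a i1 := by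
    intro i hi
    apply ha
    rw [Fin.le_def, h1]
    have : (i : ℕ) ≠ 0 := by
      intro h; exact hi (Fin.ext (by rw [h, h0]))
    omega
  have hS : 0 < ∑ i, Real.exp (k * a i) :=
    Finset.sum_pos (fun i _ => Real.exp_pos _) ⟨i0, Finset.mem_univ _⟩
  rw [show a i0 - (∑ i, a i * Real.exp (k * a i)) / (∑ i, Real.exp (k * a i))
      = (a i0 * (∑ i, Real.exp (k * a i)) - ∑ i, a i * Real.exp (k * a i)) / (∑ i, Real.exp (k * a i))
      from by field_simp; ring_nf, div_le_iff₀ hS]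
  have hsplit : a i0 * (∑ i, Real.exp (k * a i)) - ∑ i, a i * Real.exp (k * a i)
      = ∑ i ∈ univ.erase i0, (a i0 - a i) * Real.exp (k * a i) := by
    rw [Finset.mul_sum, ← Finset.sum_sub_distrib]
    rw [← Finset.add_sum_erase _ (fun i => a i0 * Real.exp (k * a i) - a i * Real.exp (k * a i))
      (Finset.mem_univ i0)]
    rw [sub_self, zero_add]
    exact Finset.sum_congr rfl fun i _ => by ring
  have hSsplit : (∑ i, Real.exp (k * a i))
      = Real.exp (k * a i0) + ∑ i ∈ univ.erase i0, Real.exp (k * a i) :=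
    (Finset.add_sum_erase _ _ (Finset.mem_univ i0)).symm
  rw [hsplit, hSsplit]
  set B : ℝ := a i0 - a iL with hB
  set T : ℝ := ∑ i ∈ univ.erase i0, Real.exp (k * a i) with hT
  set E : ℝ := Real.exp (k * a i0) with hE
  set N : ℝ := ∑ i ∈ univ.erase i0, (a i0 - a i) * Real.exp (k * a i) with hN
  have hi1mem : i1 ∈ univ.erase i0 := by
    refine Finset.mem_erase.mpr ⟨?_, Finset.mem_univ _⟩
    intro h; rw [h] at h1; omega
  have hTpos : 0 < T :=
    Finset.sum_pos (fun i _ => Real.exp_pos _) ⟨i1, hi1mem⟩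
  have hEpos : 0 < E := Real.exp_pos _
  have hNT : N ≤ B * T := by
    rw [hN, hT, Finset.mul_sum]
    refine Finset.sum_le_sum fun i _ => ?_
    exact mul_le_mul_of_nonneg_right (by have := hLle i; rw [hB]; linarith) (Real.exp_pos _).le
  -- case B ≤ ε
  rcases le_or_gt B ε with hcase | hcase
  · have h1 : B * T ≤ ε * T := mul_le_mul_of_nonneg_right hcase hTpos.le
    have h2 : 0 < ε * E := mul_pos hε hEpos
    have h3 : ε * (E + T) = ε * E + ε * T := by ring
    linarith
  -- case ε < B
  have hcard : ((univ.erase i0).card : ℝ) = (m : ℝ) - 1 := by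
    rw [Finset.card_erase_of_mem (Finset.mem_univ _), Finset.card_univ, Fintype.card_fin]
    push_cast [Nat.cast_sub (by omega : 1 ≤ m)]
    ring
  have hm2 : (2 : ℝ) ≤ (m : ℝ) := by exact_mod_cast hm
  -- T ≤ (m-1) * exp(k * a i1)
  have hTR : T ≤ ((m : ℝ) - 1) * Real.exp (k * a i1) := by
    rcases eq_or_lt_of_le hm with hm' | hm'
    · -- m = 2 : erase = {i1}
      have hsingle : univ.erase i0 = {i1} := by
        apply Finset.eq_singleton_iff_unique_mem.mpr
        refine ⟨hi1mem, fun x hx => ?_⟩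
        have hx0 : x ≠ i0 := Finset.ne_of_mem_erase hx
        have : (x : ℕ) ≠ 0 := fun h => hx0 (Fin.ext (by rw [h, h0]))
        have := x.isLt
        exact Fin.ext (by omega)
      rw [hT, hsingle, Finset.sum_singleton, ← hm']
      norm_num
    · -- m ≥ 3 : k ≥ 0
      have hk0 : 0 ≤ k := by
        have hC1 : 1 ≤ C := by
          have hm3 : (3 : ℝ) ≤ (m : ℝ) := by exact_mod_cast hm'
          have hBε : 1 < B / ε := (one_lt_div hε).mpr hcase
          rw [hC]
          nlinarith
        have := mul_nonneg (by positivity : (0:ℝ) ≤ 1 / (a i0 - a i1)) (Real.log_nonneg hC1)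
        linarith
      calc T ≤ ∑ i ∈ univ.erase i0, Real.exp (k * a i1) := by
              refine Finset.sum_le_sum fun i hi => ?_
              exact Real.exp_le_exp.mpr
                (mul_le_mul_of_nonneg_left (h1le i (Finset.ne_of_mem_erase hi)) hk0)
        _ = ((m : ℝ) - 1) * Real.exp (k * a i1) := by
              rw [Finset.sum_const, nsmul_eq_mul, hcard]
  -- E ≥ C * exp(k * a i1)
  have hEC : C * Real.exp (k * a i1) ≤ E := by
    have hk' : Real.log C ≤ k * (a i0 - a i1) := by
      calc Real.log C = (1 / (a i0 - a i1)) * Real.log C * (a i0 - a i1) := by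
            field_simp
        _ ≤ k * (a i0 - a i1) := mul_le_mul_of_nonneg_right hk hd.le
    have hCexp : C ≤ Real.exp (k * (a i0 - a i1)) := by
      rw [← Real.exp_log hpos]
      exact Real.exp_le_exp.mpr hk'
    have : Real.exp (k * (a i0 - a i1)) * Real.exp (k * a i1) = E := by
      rw [hE, ← Real.exp_add]; ring_nf
    rw [← this]
    exact mul_le_mul_of_nonneg_right hCexp (Real.exp_pos _).le
  -- finish
  have hexp1 : 0 < Real.exp (k * a i1) := Real.exp_pos _
  have hBpos : 0 < B := lt_trans hε hcase
  have key : (B - ε) * T ≤ ε * E := by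
    calc (B - ε) * T ≤ (B - ε) * (((m : ℝ) - 1) * Real.exp (k * a i1)) :=
          mul_le_mul_of_nonneg_left hTR (by linarith)
      _ ≤ ε * (C * Real.exp (k * a i1)) := by
          rw [hC]
          have h1 : ε * ((B / ε * ((m:ℝ) - 1) - 1) * Real.exp (k * a i1))
              = (B * ((m:ℝ)-1) - ε) * Real.exp (k * a i1) := by
            field_simp
          rw [h1]
          have h2 : (B - ε) * ((m:ℝ) - 1) ≤ B * ((m:ℝ)-1) - ε := by nlinarith
          nlinarith [hexp1.le, h2]
      _ ≤ ε * E := mul_le_mul_of_nonneg_left hEC hε.le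
  have h1 : B * T = (B - ε) * T + ε * T := by ring
  have h2 : ε * (E + T) = ε * E + ε * T := by ring
  linarith

theorem softmax_asymptotic_completeness (m : ℕ) (hm : 2 ≤ m) (a : Fin m → ℝ)
    (ha : Antitone a) (hgap : a ⟨1, by omega⟩ < a ⟨0, by omega⟩) (ε : ℝ) (hε : 0 < ε)
    (hpos : 0 < ((a ⟨0, by omega⟩ - a ⟨m - 1, by omega⟩) / ε) * (m - 1) - 1)
    (k : ℝ)
    (hk : (1 / (a ⟨0, by omega⟩ - a ⟨1, by omega⟩)) *
      Real.log (((a ⟨0, by omega⟩ - a ⟨m - 1, by omega⟩) / ε) * (m - 1) - 1) ≤ k) :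
    a ⟨0, by omega⟩ - (∑ i, a i * Real.exp (k * a i)) / (∑ i, Real.exp (k * a i)) ≤ ε := by
  exact softmax_aux m hm a ha _ _ _ rfl rfl rfl hgap ε hε hpos k hk
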